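/- Let Γ be a geodetic graph in which every isometrically embedded circuit has length at most five. Suppose ρ is an embedded circuit in Γ of diameter at least three which has minimal length among all such circuits, labeled 1 = u_0, u_1, ..., u_m = v_3, v_2, v_1, 1 where 1, v_1, v_2, v_3 is a geodesic subpath. Then m = 5, d(1,u_1) = 1, d(1,u_2) = d(1,u_3) = 2, d(1,u_4) = 3, and d(u_3, v_1) = 1. -/
import Mathlib

/-- A graph is geodetic if between any two vertices there is a unique shortest walk
(equivalently, a unique shortest path). -/
def IsGeodetic {V : Type*} (G : SimpleGraph V) : Prop :=
  ∀ u v : V, ∃! p : G.Walk u v, ∀ q : G.Walk u v, p.length ≤ q.length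

/-- `c : ZMod n → V` is an embedded circuit of length `n`: the vertices are distinct and
cyclically consecutive vertices are adjacent. -/
def IsEmbCircuit {V : Type*} (G : SimpleGraph V) (n : ℕ) (c : ZMod n → V) : Prop :=
  2 ≤ n ∧ Function.Injective c ∧ ∀ i : ZMod n, G.Adj (c i) (c (i + 1))

/-- An embedded circuit is isometrically embedded if the graph distance between any two of its
vertices equals the cyclic distance `min {j-i, n+i-j}` along the circuit. -/
def IsIEC {V : Type*} (G : SimpleGraph V) (n : ℕ) (c : ZMod n → V) : Prop :=
  IsEmbCircuit G n c ∧ ∀ i j : ZMod n, G.dist (c i) (c j) = min (j - i).val (i - j).val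

namespace Stmt5Aux

open SimpleGraph

variable {V : Type*} {G : SimpleGraph V}

/-! ### generic geodetic tools -/

lemma geo_unique (hG : IsGeodetic G) {u v : V} (p q : G.Walk u v)
    (hp : p.length = G.dist u v) (hq : q.length = G.dist u v) : p = q := by
  obtain ⟨r, _, hru⟩ := hG u v
  have h1 : p = r := hru p (fun s => by rw [hp]; exact SimpleGraph.dist_le s)
  have h2 : q = r := hru q (fun s => by rw [hq]; exact SimpleGraph.dist_le s)
  rw [h1, h2]

lemma two_commons (hG : IsGeodetic G) {u v z z' : V} (hd : G.dist u v = 2)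
    (h1 : G.Adj u z) (h2 : G.Adj z v) (h1' : G.Adj u z') (h2' : G.Adj z' v) : z = z' := by
  have he := geo_unique hG (.cons h1 (.cons h2 .nil)) (.cons h1' (.cons h2' .nil))
    (by simp [hd]) (by simp [hd])
  have := congrArg SimpleGraph.Walk.support he
  simp [SimpleGraph.Walk.support_cons] at this
  exact this

lemma three_unique (hG : IsGeodetic G) {u v x y x' y' : V} (hd : G.dist u v = 3)
    (h1 : G.Adj u x) (h2 : G.Adj x y) (h3 : G.Adj y v)
    (h1' : G.Adj u x') (h2' : G.Adj x' y') (h3' : G.Adj y' v) : x = x' ∧ y = y' := by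
  have he := geo_unique hG (.cons h1 (.cons h2 (.cons h3 .nil)))
    (.cons h1' (.cons h2' (.cons h3' .nil))) (by simp [hd]) (by simp [hd])
  have := congrArg SimpleGraph.Walk.support he
  simp [SimpleGraph.Walk.support_cons] at this
  exact this

lemma four_unique (hG : IsGeodetic G) {u v x y z x' y' z' : V} (hd : G.dist u v = 4)
    (h1 : G.Adj u x) (h2 : G.Adj x y) (h3 : G.Adj y z) (h4 : G.Adj z v)
    (h1' : G.Adj u x') (h2' : G.Adj x' y') (h3' : G.Adj y' z') (h4' : G.Adj z' v) :
    x = x' ∧ y = y' ∧ z = z' := by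
  have he := geo_unique hG (.cons h1 (.cons h2 (.cons h3 (.cons h4 .nil))))
    (.cons h1' (.cons h2' (.cons h3' (.cons h4' .nil)))) (by simp [hd]) (by simp [hd])
  have := congrArg SimpleGraph.Walk.support he
  simp [SimpleGraph.Walk.support_cons] at this
  exact this

lemma walk_len2 {u v : V} (hd : G.dist u v = 2) : ∃ z, G.Adj u z ∧ G.Adj z v := by
  obtain ⟨p, hp⟩ := SimpleGraph.exists_walk_of_dist_ne_zero (G := G) (u := u) (v := v)
    (by rw [hd]; omega)
  rw [hd] at hp
  cases p with
  | nil => simp at hp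
  | cons h1 q =>
    cases q with
    | nil => simp at hp
    | cons h2 r =>
      cases r with
      | nil => exact ⟨_, h1, h2⟩
      | cons h3 s => simp [SimpleGraph.Walk.length_cons] at hp

lemma walk_len3 {u v : V} (hd : G.dist u v = 3) :
    ∃ x y, G.Adj u x ∧ G.Adj x y ∧ G.Adj y v := by
  obtain ⟨p, hp⟩ := SimpleGraph.exists_walk_of_dist_ne_zero (G := G) (u := u) (v := v)
    (by rw [hd]; omega)
  rw [hd] at hp
  cases p with
  | nil => simp at hp
  | cons h1 q =>
    cases q with
    | nil => simp at hp
    | cons h2 r =>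
      cases r with
      | nil => simp at hp
      | cons h3 s =>
        cases s with
        | nil => exact ⟨_, _, h1, h2, h3⟩
        | cons h4 t => simp [SimpleGraph.Walk.length_cons] at hp

lemma dist_le_two_of_adj_adj {u v z : V} (h1 : G.Adj u z) (h2 : G.Adj z v) :
    G.dist u v ≤ 2 := by
  simpa using SimpleGraph.dist_le (.cons h1 (.cons h2 .nil))

lemma dist_le_three_of_chain {u v x y : V} (h1 : G.Adj u x) (h2 : G.Adj x y)
    (h3 : G.Adj y v) : G.dist u v ≤ 3 := by
  simpa using SimpleGraph.dist_le (.cons h1 (.cons h2 (.cons h3 .nil)))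

lemma dist_adj {u v : V} (h : G.Adj u v) : G.dist u v ≤ 1 := by
  simpa using SimpleGraph.dist_le (.cons h .nil)

lemma htail (hconn : G.Connected) {u v x y : V} (hd : G.dist u v = 3)
    (h1 : G.Adj u x) (h2 : G.Adj x y) (h3 : G.Adj y v) :
    G.dist x v = 2 ∧ G.dist u y = 2 := by
  constructor
  · have hle : G.dist x v ≤ 2 := dist_le_two_of_adj_adj h2 h3
    have h4 : G.dist u v ≤ G.dist u x + G.dist x v := hconn.dist_triangle
    have h5 : G.dist u x ≤ 1 := dist_adj h1
    omega
  · have hle : G.dist u y ≤ 2 := dist_le_two_of_adj_adj h1 h2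
    have h4 : G.dist u v ≤ G.dist u y + G.dist y v := hconn.dist_triangle
    have h5 : G.dist y v ≤ 1 := dist_adj h3
    omega

lemma gv_pre (hconn : G.Connected) {u v : V} (w : G.Walk u v) :
    ∀ l, G.dist u (w.getVert l) ≤ l := by
  induction w with
  | nil => intro l; simp [SimpleGraph.Walk.getVert, SimpleGraph.dist_self]
  | @cons a b d h p ih =>
    intro l
    cases l with
    | zero => simp [SimpleGraph.Walk.getVert_zero, SimpleGraph.dist_self]
    | succ l =>
      rw [SimpleGraph.Walk.getVert_cons_succ]
      have h1 : G.dist a (p.getVert l) ≤ G.dist a b + G.dist b (p.getVert l) :=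
        hconn.dist_triangle
      have h2 : G.dist a b ≤ 1 := by simpa using SimpleGraph.dist_le (.cons h .nil)
      have h3 := ih l
      omega

lemma gv_suf {u v : V} (w : G.Walk u v) :
    ∀ l, G.dist (w.getVert l) v ≤ w.length - l := by
  induction w with
  | nil => intro l; simp [SimpleGraph.Walk.getVert, SimpleGraph.dist_self]
  | @cons a b d h p ih =>
    intro l
    cases l with
    | zero =>
      rw [SimpleGraph.Walk.getVert_zero]
      have := SimpleGraph.dist_le (SimpleGraph.Walk.cons h p)
      simpa using this
    | succ l =>
      rw [SimpleGraph.Walk.getVert_cons_succ]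
      have h3 := ih l
      have : (SimpleGraph.Walk.cons h p).length = p.length + 1 := by simp
      omega

/-! ### circuit tools -/

variable {m : ℕ} {c : ZMod (m + 3) → V}

lemma adjp (hc : IsEmbCircuit G (m + 3) c) (j : ℕ) : G.Adj (c ↑j) (c ↑(j + 1)) := by
  have := hc.2.2 (↑j : ZMod (m + 3))
  have he : ((j : ZMod (m + 3)) + 1) = ((j + 1 : ℕ) : ZMod (m + 3)) := by push_cast; ring
  rwa [he] at this

lemma cadd (c : ZMod (m + 3) → V) (a : ℕ) : c ↑(a + (m + 3)) = c ↑a := by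
  congr 1
  rw [Nat.cast_add, ZMod.natCast_self, add_zero]

lemma cadd' (c : ZMod (m + 3) → V) {a b : ℕ} (h : a = b + (m + 3)) : c ↑a = c ↑b := by
  rw [h]; exact cadd c b

lemma cne' (hc : IsEmbCircuit G (m + 3) c) (a d : ℕ) (h1 : 1 ≤ d) (h2 : d < m + 3) :
    c ↑(a + d) ≠ c ↑a := by
  intro h
  have h3 := hc.2.1 h
  have h4 : ((a : ZMod (m + 3)) + d) = a := by push_cast at h3 ⊢; exact h3
  have h5 : ((d : ℕ) : ZMod (m + 3)) = 0 := by linear_combination h4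
  rw [ZMod.natCast_eq_zero_iff] at h5
  have := Nat.le_of_dvd (by omega) h5
  omega

lemma cneq (hc : IsEmbCircuit G (m + 3) c) (a b : ℕ) (ha : a < m + 3) (hb : b < m + 3)
    (hab : a ≠ b) : c ↑a ≠ c ↑b := by
  intro h
  have h3 := hc.2.1 h
  have := congrArg ZMod.val h3
  rw [ZMod.val_cast_of_lt ha, ZMod.val_cast_of_lt hb] at this
  exact hab this

lemma hval' (a b : ℕ) (ha : a < m + 3) (hb : b < m + 3) :
    ((↑a - ↑b : ZMod (m + 3))).val = if b ≤ a then a - b else (m + 3) + a - b := by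
  split_ifs with h
  · rw [← Nat.cast_sub h, ZMod.val_cast_of_lt (by omega)]
  · have hb' : b ≤ m + 3 + a := by omega
    have he : (↑a - ↑b : ZMod (m + 3)) = ↑(m + 3 + a - b) := by
      rw [Nat.cast_sub hb', Nat.cast_add, ZMod.natCast_self, zero_add]
    rw [he, ZMod.val_cast_of_lt (by omega)]

lemma cd_tri (x y z : ZMod (m + 3)) :
    min (z - x).val (x - z).val ≤
      min (y - x).val (x - y).val + min (z - y).val (y - z).val := by
  set A := (y - x).val with hA
  set A' := (x - y).val with hA'
  set B := (z - y).val with hB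
  set B' := (y - z).val with hB'
  have hAlt : A < m + 3 := ZMod.val_lt _
  have hA'lt : A' < m + 3 := ZMod.val_lt _
  have hBlt : B < m + 3 := ZMod.val_lt _
  have hB'lt : B' < m + 3 := ZMod.val_lt _
  have eA : ((A : ℕ) : ZMod (m + 3)) = y - x := ZMod.natCast_rightInverse _
  have eA' : ((A' : ℕ) : ZMod (m + 3)) = x - y := ZMod.natCast_rightInverse _
  have eB : ((B : ℕ) : ZMod (m + 3)) = z - y := ZMod.natCast_rightInverse _
  have eB' : ((B' : ℕ) : ZMod (m + 3)) = y - z := ZMod.natCast_rightInverse _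
  have hCle : (z - x).val ≤ B + A := by
    have h1 : z - x = (z - y) + (y - x) := by ring
    rw [h1, ZMod.val_add]
    exact Nat.mod_le _ _
  have hC'le : (x - z).val ≤ A' + B' := by
    have h1 : x - z = (x - y) + (y - z) := by ring
    rw [h1, ZMod.val_add]
    exact Nat.mod_le _ _
  have hm1 : (z - x).val = if B' ≤ A then A - B' else (m + 3) + A - B' := by
    have h1 : z - x = (↑A - ↑B' : ZMod (m + 3)) := by rw [eA, eB']; ring
    rw [h1]; exact hval' A B' hAlt hB'lt
  have hm2 : (x - z).val = if A ≤ B' then B' - A else (m + 3) + B' - A := by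
    have h1 : x - z = (↑B' - ↑A : ZMod (m + 3)) := by rw [eA, eB']; ring
    rw [h1]; exact hval' B' A hB'lt hAlt
  have hm3 : (z - x).val = if A' ≤ B then B - A' else (m + 3) + B - A' := by
    have h1 : z - x = (↑B - ↑A' : ZMod (m + 3)) := by rw [eA', eB]; ring
    rw [h1]; exact hval' B A' hBlt hA'lt
  have hm4 : (x - z).val = if B ≤ A' then A' - B else (m + 3) + A' - B := by
    have h1 : x - z = (↑A' - ↑B : ZMod (m + 3)) := by rw [eA', eB]; ring
    rw [h1]; exact hval' A' B hA'lt hBlt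
  split_ifs at hm1 hm2 hm3 hm4 <;> omega

lemma dist_arc (hG : IsGeodetic G) (hc : IsEmbCircuit G (m + 3) c) (i s : ℕ) :
    G.dist (c ↑i) (c ↑(i + s)) ≤ s := by
  have hconn : G.Connected := by
    rw [SimpleGraph.connected_iff]
    refine ⟨fun u v => ?_, ⟨c 0⟩⟩
    obtain ⟨p, _⟩ := (hG u v).exists
    exact ⟨p⟩
  induction s with
  | zero => simp [SimpleGraph.dist_self]
  | succ s ih =>
    have h1 : G.dist (c ↑i) (c ↑(i + s + 1)) ≤
        G.dist (c ↑i) (c ↑(i + s)) + G.dist (c ↑(i + s)) (c ↑(i + s + 1)) :=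
      hconn.dist_triangle
    have h2 : G.dist (c ↑(i + s)) (c ↑(i + s + 1)) ≤ 1 := dist_adj (adjp hc (i + s))
    have h3 : i + (s + 1) = i + s + 1 := by omega
    rw [h3]
    omega

/-! ### surgery -/

lemma surgery_core
    (hmin : ∀ (m' : ℕ) (c' : ZMod m' → V), IsEmbCircuit G m' c' →
      (∃ i j : ZMod m', 3 ≤ G.dist (c' i) (c' j)) → m + 3 ≤ m')
    (hc : IsEmbCircuit G (m + 3) c)
    (i t k : ℕ) (w : ℕ → V)
    (ht : 1 ≤ t) (hk : 1 ≤ k) (hlt : t + k < m + 3)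
    (hw0 : w 0 = c ↑(i + t)) (hwk : w k = c ↑i)
    (hadj : ∀ l, l < k → G.Adj (w l) (w (l + 1)))
    (hwoff : ∀ l, 0 < l → l < k → ∀ r : ZMod (m + 3), w l ≠ c r)
    (hwinj : ∀ l1 l2, l1 ≤ k → l2 ≤ k → w l1 = w l2 → l1 = l2) :
    ∀ s1 s2, s1 ≤ t → s2 ≤ t → G.dist (c ↑(i + s1)) (c ↑(i + s2)) ≤ 2 := by
  set M := t + k with hM
  haveI : NeZero M := ⟨by omega⟩
  haveI : Fact (1 < M) := ⟨by omega⟩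
  set f : ℕ → V := fun x => if x ≤ t then c ↑(i + x) else w (x - t) with hf
  have key : ∀ x y, x < M → y < M → f x = f y → x = y := by
    intro x y hx hy hxy
    rcases le_or_gt x t with hxt | hxt <;> rcases le_or_gt y t with hyt | hyt
    · simp only [hf, if_pos hxt, if_pos hyt] at hxy
      have h1 := hc.2.1 hxy
      have h2 : (i + x) ≡ (i + y) [MOD (m + 3)] := (ZMod.natCast_eq_natCast_iff _ _ _).mp h1
      have h3 : x ≡ y [MOD (m + 3)] := Nat.ModEq.add_left_cancel' i h2
      have h4 : x % (m + 3) = y % (m + 3) := h3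
      rw [Nat.mod_eq_of_lt (by omega), Nat.mod_eq_of_lt (by omega)] at h4
      exact h4
    · exfalso
      simp only [hf, if_pos hxt, if_neg (by omega : ¬ y ≤ t)] at hxy
      exact hwoff (y - t) (by omega) (by omega) _ hxy.symm
    · exfalso
      simp only [hf, if_neg (by omega : ¬ x ≤ t), if_pos hyt] at hxy
      exact hwoff (x - t) (by omega) (by omega) _ hxy
    · simp only [hf, if_neg (by omega : ¬ x ≤ t), if_neg (by omega : ¬ y ≤ t)] at hxy
      have := hwinj (x - t) (y - t) (by omega) (by omega) hxy
      omega
  have emb : IsEmbCircuit G M (fun r => f r.val) := by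
    refine ⟨by omega, ?_, ?_⟩
    · intro r1 r2 hr
      have h1 := key _ _ (ZMod.val_lt r1) (ZMod.val_lt r2) hr
      exact ZMod.val_injective M h1
    · intro r
      have hx : r.val < M := ZMod.val_lt r
      have hv1 : (r + 1).val = (r.val + 1) % M := by
        rw [ZMod.val_add, ZMod.val_one]
      show G.Adj (f r.val) (f ((r + 1).val))
      rw [hv1]
      by_cases hlast : r.val = M - 1
      · have h0 : (r.val + 1) % M = 0 := by
          rw [hlast, Nat.sub_add_cancel (by omega), Nat.mod_self]
        rw [h0, hlast]
        have hf0 : f 0 = c ↑i := by simp [hf]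
        by_cases hk1 : k = 1
        · have hft : f (M - 1) = c ↑(i + t) := by
            have : M - 1 = t := by omega
            rw [this]; simp [hf]
          rw [hft, hf0, ← hw0, ← hwk, hk1]
          exact hadj 0 (by omega)
        · have hft : f (M - 1) = w (k - 1) := by
            have h2 : ¬ (M - 1 ≤ t) := by omega
            simp only [hf, if_neg h2]
            congr 1
            omega
          rw [hft, hf0, ← hwk]
          have h3 : k - 1 + 1 = k := by omega
          have := hadj (k - 1) (by omega)
          rwa [h3] at this
      · have h0 : (r.val + 1) % M = r.val + 1 := Nat.mod_eq_of_lt (by omega)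
        rw [h0]
        rcases lt_trichotomy r.val t with h1 | h1 | h1
        · have e1 : f r.val = c ↑(i + r.val) := by simp [hf, le_of_lt h1]
          have e2 : f (r.val + 1) = c ↑(i + r.val + 1) := by
            have h' : i + r.val + 1 = i + (r.val + 1) := by omega
            rw [h']
            simp only [hf, if_pos (by omega : r.val + 1 ≤ t)]
          rw [e1, e2]
          exact adjp hc (i + r.val)
        · have e1 : f r.val = c ↑(i + t) := by simp [hf, h1]
          have e2 : f (r.val + 1) = w 1 := by
            simp only [hf, if_neg (by omega : ¬ r.val + 1 ≤ t)]
            congr 1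
            omega
          rw [e1, e2, ← hw0]
          exact hadj 0 (by omega)
        · have e1 : f r.val = w (r.val - t) := by simp [hf, Nat.not_le.mpr h1]
          have e2 : f (r.val + 1) = w (r.val - t + 1) := by
            simp only [hf, if_neg (by omega : ¬ r.val + 1 ≤ t)]
            congr 1
            omega
          rw [e1, e2]
          exact hadj (r.val - t) (by omega)
  have hno : ¬ ∃ r s : ZMod M, 3 ≤ G.dist (f r.val) (f s.val) := by
    intro h
    have := hmin M _ emb h
    omega
  push_neg at hno
  intro s1 s2 hs1 hs2
  have e1 : f ((s1 : ZMod M)).val = c ↑(i + s1) := by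
    rw [ZMod.val_cast_of_lt (by omega)]
    simp [hf, hs1]
  have e2 : f ((s2 : ZMod M)).val = c ↑(i + s2) := by
    rw [ZMod.val_cast_of_lt (by omega)]
    simp [hf, hs2]
  have := hno ↑s1 ↑s2
  rw [e1, e2] at this
  omega

lemma surgery1
    (hmin : ∀ (m' : ℕ) (c' : ZMod m' → V), IsEmbCircuit G m' c' →
      (∃ i j : ZMod m', 3 ≤ G.dist (c' i) (c' j)) → m + 3 ≤ m')
    (hc : IsEmbCircuit G (m + 3) c)
    (i t : ℕ) (ht : 1 ≤ t) (hlt : t + 1 < m + 3)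
    (had : G.Adj (c ↑(i + t)) (c ↑i)) :
    ∀ s1 s2, s1 ≤ t → s2 ≤ t → G.dist (c ↑(i + s1)) (c ↑(i + s2)) ≤ 2 := by
  have hne : c ↑(i + t) ≠ c ↑i := cne' hc i t ht (by omega)
  apply surgery_core hmin hc i t 1
    (fun l => match l with | 0 => c ↑(i + t) | _ + 1 => c ↑i) ht (by omega) (by omega)
  · rfl
  · rfl
  · intro l hl
    have hl0 : l = 0 := by omega
    subst hl0
    exact had
  · intro l hl1 hl2
    omega
  · intro l1 l2 h1 h2 heq
    interval_cases l1 <;> interval_cases l2 <;>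
      first
        | rfl
        | exact absurd heq hne
        | exact absurd heq.symm hne

lemma surgery2
    (hmin : ∀ (m' : ℕ) (c' : ZMod m' → V), IsEmbCircuit G m' c' →
      (∃ i j : ZMod m', 3 ≤ G.dist (c' i) (c' j)) → m + 3 ≤ m')
    (hc : IsEmbCircuit G (m + 3) c)
    (i t : ℕ) (z : V) (ht : 1 ≤ t) (hlt : t + 2 < m + 3)
    (h1 : G.Adj (c ↑(i + t)) z) (h2 : G.Adj z (c ↑i))
    (hz : ∀ r : ZMod (m + 3), z ≠ c r) :
    ∀ s1 s2, s1 ≤ t → s2 ≤ t → G.dist (c ↑(i + s1)) (c ↑(i + s2)) ≤ 2 := by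
  have hne : c ↑(i + t) ≠ c ↑i := cne' hc i t ht (by omega)
  have hz1 : c ↑(i + t) ≠ z := fun h => hz _ h.symm
  have hz2 : z ≠ c ↑i := hz _
  apply surgery_core hmin hc i t 2
    (fun l => match l with | 0 => c ↑(i + t) | 1 => z | _ + 2 => c ↑i) ht (by omega) (by omega)
  · rfl
  · rfl
  · intro l hl
    interval_cases l
    · exact h1
    · exact h2
  · intro l hl1 hl2 r
    have hl0 : l = 1 := by omega
    subst hl0
    exact hz r
  · intro l1 l2 hl1 hl2 heq
    interval_cases l1 <;> interval_cases l2 <;>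
      first
        | rfl
        | exact absurd heq hne
        | exact absurd heq.symm hne
        | exact absurd heq.symm hz1
        | exact absurd heq hz1
        | exact absurd heq hz2
        | exact absurd heq.symm hz2

lemma surgery3
    (hmin : ∀ (m' : ℕ) (c' : ZMod m' → V), IsEmbCircuit G m' c' →
      (∃ i j : ZMod m', 3 ≤ G.dist (c' i) (c' j)) → m + 3 ≤ m')
    (hc : IsEmbCircuit G (m + 3) c)
    (i t : ℕ) (z1 z2 : V) (ht : 1 ≤ t) (hlt : t + 3 < m + 3)
    (h1 : G.Adj (c ↑(i + t)) z1) (h2 : G.Adj z1 z2) (h3 : G.Adj z2 (c ↑i))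
    (hz1 : ∀ r : ZMod (m + 3), z1 ≠ c r) (hz2 : ∀ r : ZMod (m + 3), z2 ≠ c r)
    (hz12 : z1 ≠ z2) :
    ∀ s1 s2, s1 ≤ t → s2 ≤ t → G.dist (c ↑(i + s1)) (c ↑(i + s2)) ≤ 2 := by
  have hne : c ↑(i + t) ≠ c ↑i := cne' hc i t ht (by omega)
  have hz1a : c ↑(i + t) ≠ z1 := fun h => hz1 _ h.symm
  have hz1b : z1 ≠ c ↑i := hz1 _
  have hz2a : c ↑(i + t) ≠ z2 := fun h => hz2 _ h.symm
  have hz2b : z2 ≠ c ↑i := hz2 _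
  apply surgery_core hmin hc i t 3
    (fun l => match l with | 0 => c ↑(i + t) | 1 => z1 | 2 => z2 | _ + 3 => c ↑i)
    ht (by omega) (by omega)
  · rfl
  · rfl
  · intro l hl
    interval_cases l
    · exact h1
    · exact h2
    · exact h3
  · intro l hl1 hl2 r
    interval_cases l
    · exact hz1 r
    · exact hz2 r
  · intro l1 l2 hl1 hl2 heq
    interval_cases l1 <;> interval_cases l2 <;>
      first
        | rfl
        | exact absurd heq hne
        | exact absurd heq.symm hne
        | exact absurd heq hz1a
        | exact absurd heq.symm hz1a
        | exact absurd heq hz2a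
        | exact absurd heq.symm hz2a
        | exact absurd heq hz12
        | exact absurd heq.symm hz12
        | exact absurd heq hz1b
        | exact absurd heq.symm hz1b
        | exact absurd heq hz2b
        | exact absurd heq.symm hz2b


/-! ### context bundle and basic facts -/

structure Ctx {V : Type*} (G : SimpleGraph V) (m : ℕ) (c : ZMod (m + 3) → V) : Prop where
  hG : IsGeodetic G
  hc : IsEmbCircuit G (m + 3) c
  hmin : ∀ (m' : ℕ) (c' : ZMod m' → V), IsEmbCircuit G m' c' →
      (∃ i j : ZMod m', 3 ≤ G.dist (c' i) (c' j)) → m + 3 ≤ m'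
  hgeo : G.dist (c ↑(0 : ℕ)) (c ↑m) = 3
  hm : 3 ≤ m

namespace Ctx

variable {m : ℕ} {c : ZMod (m + 3) → V} (h : Ctx G m c)

include h

lemma reach (u v : V) : G.Reachable u v := by
  obtain ⟨p, _⟩ := (h.hG u v).exists
  exact ⟨p⟩

lemma conn : G.Connected := by
  rw [SimpleGraph.connected_iff]
  exact ⟨fun u v => h.reach u v, ⟨c 0⟩⟩

/-- distance between distinct circuit positions is nonzero -/
lemma dpos {a b : ℕ} (ha : a < m + 3) (hb : b < m + 3) (hab : a ≠ b) :
    G.dist (c ↑a) (c ↑b) ≠ 0 := by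
  intro h0
  rw [SimpleGraph.dist_eq_zero_iff_eq_or_not_reachable] at h0
  rcases h0 with h0 | h0
  · exact cneq h.hc a b ha hb hab h0
  · exact h0 (h.reach _ _)

lemma darc (i s : ℕ) : G.dist (c ↑i) (c ↑(i + s)) ≤ s := dist_arc h.hG h.hc i s

/-- the unique geodesic from position 0 to position m is the arc through m+2, m+1 -/
lemma B1 {x y : V} (h1 : G.Adj (c ↑(0 : ℕ)) x) (h2 : G.Adj x y) (h3 : G.Adj y (c ↑m)) :
    x = c ↑(m + 2) ∧ y = c ↑(m + 1) := by
  have a1 : G.Adj (c ↑(0 : ℕ)) (c ↑(m + 2)) := by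
    have := adjp h.hc (m + 2)
    have e : c ↑(m + 2 + 1) = c ↑(0 : ℕ) := cadd' c (by omega)
    rw [e] at this
    exact this.symm
  have a2 : G.Adj (c ↑(m + 2)) (c ↑(m + 1)) := (adjp h.hc (m + 1)).symm
  have a3 : G.Adj (c ↑(m + 1)) (c ↑m) := (adjp h.hc m).symm
  exact three_unique h.hG h.hgeo h1 h2 h3 a1 a2 a3

/-- `d(u₁, v₃) ≥ 3` -/
lemma F1m : 3 ≤ G.dist (c ↑(1 : ℕ)) (c ↑m) := by
  by_contra hcon
  have hm := h.hm
  have h2 : G.dist (c ↑(1 : ℕ)) (c ↑m) = 0 ∨ G.dist (c ↑(1 : ℕ)) (c ↑m) = 1 ∨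
      G.dist (c ↑(1 : ℕ)) (c ↑m) = 2 := by omega
  rcases h2 with h2 | h2 | h2
  · exact h.dpos (by omega) (by omega) (by omega) h2
  · rw [SimpleGraph.dist_eq_one_iff_adj] at h2
    have : G.dist (c ↑(0 : ℕ)) (c ↑m) ≤ 2 := dist_le_two_of_adj_adj (adjp h.hc 0) h2
    rw [h.hgeo] at this
    omega
  · obtain ⟨z, hz1, hz2⟩ := walk_len2 h2
    have := h.B1 (adjp h.hc 0) hz1 hz2
    exact cneq h.hc 1 (m + 2) (by omega) (by omega) (by omega) this.1

/-- `d(1, u_{m-1}) ≥ 3` -/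
lemma F0m1 : 3 ≤ G.dist (c ↑(0 : ℕ)) (c ↑(m - 1)) := by
  by_contra hcon
  have hm := h.hm
  have am : G.Adj (c ↑(m - 1)) (c ↑m) := by
    have := adjp h.hc (m - 1)
    have e : m - 1 + 1 = m := by omega
    rwa [e] at this
  have h2 : G.dist (c ↑(0 : ℕ)) (c ↑(m - 1)) = 0 ∨ G.dist (c ↑(0 : ℕ)) (c ↑(m - 1)) = 1 ∨
      G.dist (c ↑(0 : ℕ)) (c ↑(m - 1)) = 2 := by omega
  rcases h2 with h2 | h2 | h2
  · exact h.dpos (by omega) (by omega) (by omega) h2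
  · rw [SimpleGraph.dist_eq_one_iff_adj] at h2
    have : G.dist (c ↑(0 : ℕ)) (c ↑m) ≤ 2 := dist_le_two_of_adj_adj h2 am
    rw [h.hgeo] at this
    omega
  · obtain ⟨z, hz1, hz2⟩ := walk_len2 h2
    have := h.B1 hz1 hz2 am
    exact cneq h.hc (m - 1) (m + 1) (by omega) (by omega) (by omega) this.2

/-- separation: if both closed arcs determined by positions `P < Q` have all their
vertex pairs at distance at most 2, then `P ∈ [2, m-2]` and `Q ∈ {m+1, m+2}`. -/
lemma sep (P Q : ℕ) (hPQ : P < Q) (hQ : Q < m + 3)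
    (S1 : ∀ s1 s2, s1 ≤ Q - P → s2 ≤ Q - P →
      G.dist (c ↑(P + s1)) (c ↑(P + s2)) ≤ 2)
    (S2 : ∀ s1 s2, s1 ≤ m + 3 - (Q - P) → s2 ≤ m + 3 - (Q - P) →
      G.dist (c ↑(Q + s1)) (c ↑(Q + s2)) ≤ 2) :
    2 ≤ P ∧ P ≤ m - 2 ∧ (Q = m + 1 ∨ Q = m + 2) := by
  have hm := h.hm
  have hPm : P < m := by
    by_contra hcon
    have hx := S2 (m + 3 - Q) (m + 3 - Q + m) (by omega) (by omega)
    have e1 : c ↑(Q + (m + 3 - Q)) = c ↑(0 : ℕ) := cadd' c (by omega)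
    have e2 : c ↑(Q + (m + 3 - Q + m)) = c ↑m := cadd' c (by omega)
    rw [e1, e2] at hx
    rw [h.hgeo] at hx
    omega
  have hmQ : m < Q := by
    by_contra hcon
    have hx := S2 (m + 3 - Q) (m - Q) (by omega) (by omega)
    have e1 : c ↑(Q + (m + 3 - Q)) = c ↑(0 : ℕ) := cadd' c (by omega)
    have e2 : Q + (m - Q) = m := by omega
    rw [e1, e2] at hx
    rw [h.hgeo] at hx
    omega
  have hP1 : 1 ≤ P := by
    by_contra hcon
    have hx := S1 0 m (by omega) (by omega)
    have e1 : P + 0 = 0 := by omega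
    have e2 : P + m = m := by omega
    rw [e1, e2] at hx
    rw [h.hgeo] at hx
    omega
  have hP2 : 2 ≤ P := by
    by_contra hcon
    have hPv : P = 1 := by omega
    have hx := S1 0 (m - 1) (by omega) (by omega)
    have e1 : P + 0 = 1 := by omega
    have e2 : P + (m - 1) = m := by omega
    rw [e1, e2] at hx
    have := h.F1m
    omega
  have hPm2 : P ≤ m - 2 := by
    by_contra hcon
    have hPv : P = m - 1 := by omega
    have hx := S2 (m + 3 - Q) (m + 3 - Q + (m - 1)) (by omega) (by omega)
    have e1 : c ↑(Q + (m + 3 - Q)) = c ↑(0 : ℕ) := cadd' c (by omega)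
    have e2 : c ↑(Q + (m + 3 - Q + (m - 1))) = c ↑(m - 1) := cadd' c (by omega)
    rw [e1, e2] at hx
    have := h.F0m1
    omega
  exact ⟨hP2, hPm2, by omega⟩

/-- classification of adjacencies between circuit vertices: consecutive, the wrap edge,
or a chord from `[2, m-2]` to `{m+1, m+2}`. -/
lemma adj_class : ∀ P Q : ℕ, P < Q → Q < m + 3 → G.Adj (c ↑P) (c ↑Q) →
    Q - P = 1 ∨ (P = 0 ∧ Q = m + 2) ∨ (2 ≤ P ∧ P ≤ m - 2 ∧ (Q = m + 1 ∨ Q = m + 2)) := by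
  intro P Q hPQ hQ hadj
  have hm := h.hm
  by_cases hcons : Q - P = 1
  · exact Or.inl hcons
  by_cases hwrap : P = 0 ∧ Q = m + 2
  · exact Or.inr (Or.inl hwrap)
  have hQP2 : 2 ≤ Q - P := by omega
  have hQPn : Q - P ≤ m + 1 := by omega
  have S1 : ∀ s1 s2, s1 ≤ Q - P → s2 ≤ Q - P →
      G.dist (c ↑(P + s1)) (c ↑(P + s2)) ≤ 2 := by
    apply surgery1 h.hmin h.hc P (Q - P) (by omega) (by omega)
    have e : P + (Q - P) = Q := by omega
    rw [e]
    exact hadj.symm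
  have S2 : ∀ s1 s2, s1 ≤ m + 3 - (Q - P) → s2 ≤ m + 3 - (Q - P) →
      G.dist (c ↑(Q + s1)) (c ↑(Q + s2)) ≤ 2 := by
    apply surgery1 h.hmin h.hc Q (m + 3 - (Q - P)) (by omega) (by omega)
    have e : c ↑(Q + (m + 3 - (Q - P))) = c ↑P := cadd' c (by omega)
    rw [e]
    exact hadj
  exact Or.inr (Or.inr (h.sep P Q hPQ hQ S1 S2))

/-- circuit distance is at most the cyclic distance -/
lemma dist_le_cd (x y : ZMod (m + 3)) :
    G.dist (c x) (c y) ≤ min (y - x).val (x - y).val := by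
  have e1 : ((x.val : ℕ) : ZMod (m + 3)) = x := ZMod.natCast_rightInverse _
  have e1' : ((y.val : ℕ) : ZMod (m + 3)) = y := ZMod.natCast_rightInverse _
  have e2 : (((y - x).val : ℕ) : ZMod (m + 3)) = y - x := ZMod.natCast_rightInverse _
  have e2' : (((x - y).val : ℕ) : ZMod (m + 3)) = x - y := ZMod.natCast_rightInverse _
  refine le_min ?_ ?_
  · have e3 : ((x.val + (y - x).val : ℕ) : ZMod (m + 3)) = y := by
      rw [Nat.cast_add, e1, e2]; ring
    have := h.darc x.val (y - x).val
    rw [e1, e3] at this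
    exact this
  · have e3 : ((y.val + (x - y).val : ℕ) : ZMod (m + 3)) = x := by
      rw [Nat.cast_add, e1', e2']; ring
    have := h.darc y.val (x - y).val
    rw [e1', e3] at this
    rw [SimpleGraph.dist_comm]
    exact this

lemma nbr0 : ∀ j : ℕ, j < m + 3 → G.Adj (c ↑(0 : ℕ)) (c ↑j) → j = 1 ∨ j = m + 2 := by
  intro j hj hadj
  have hm := h.hm
  rcases Nat.lt_trichotomy 0 j with hj0 | hj0 | hj0
  · rcases h.adj_class 0 j hj0 hj hadj with hcl | hcl | hcl <;> omega
  · exfalso; exact hadj.ne (by rw [← hj0])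
  · omega

lemma nbr1 : ∀ j : ℕ, j < m + 3 → G.Adj (c ↑(1 : ℕ)) (c ↑j) → j = 0 ∨ j = 2 := by
  intro j hj hadj
  have hm := h.hm
  rcases Nat.lt_trichotomy 1 j with hj0 | hj0 | hj0
  · rcases h.adj_class 1 j hj0 hj hadj with hcl | hcl | hcl <;> omega
  · exfalso; exact hadj.ne (by rw [← hj0])
  · omega

lemma nbrm : ∀ j : ℕ, j < m + 3 → G.Adj (c ↑m) (c ↑j) → j = m - 1 ∨ j = m + 1 := by
  intro j hj hadj
  have hm := h.hm
  rcases Nat.lt_trichotomy m j with hj0 | hj0 | hj0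
  · rcases h.adj_class m j hj0 hj hadj with hcl | hcl | hcl <;> omega
  · exfalso; exact hadj.ne (by rw [← hj0])
  · rcases h.adj_class j m hj0 (by omega) hadj.symm with hcl | hcl | hcl <;> omega

lemma nbrm1 : ∀ j : ℕ, j < m + 3 → G.Adj (c ↑(m - 1)) (c ↑j) → j = m - 2 ∨ j = m := by
  intro j hj hadj
  have hm := h.hm
  rcases Nat.lt_trichotomy (m - 1) j with hj0 | hj0 | hj0
  · rcases h.adj_class (m - 1) j hj0 hj hadj with hcl | hcl | hcl <;> omega
  · exfalso; exact hadj.ne (by rw [← hj0])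
  · rcases h.adj_class j (m - 1) hj0 (by omega) hadj.symm with hcl | hcl | hcl <;> omega


lemma chordS1 {P Q : ℕ} (hPQ : P < Q) (hQ : Q < m + 3) (hg : Q - P ≤ m + 1)
    (had : G.Adj (c ↑P) (c ↑Q)) :
    ∀ s1 s2, s1 ≤ Q - P → s2 ≤ Q - P → G.dist (c ↑(P + s1)) (c ↑(P + s2)) ≤ 2 := by
  apply surgery1 h.hmin h.hc P (Q - P) (by omega) (by omega)
  rw [show P + (Q - P) = Q by omega]
  exact had.symm

lemma chordS2 {P Q : ℕ} (hPQ : P < Q) (hQ : Q < m + 3) (hg : 2 ≤ Q - P)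
    (had : G.Adj (c ↑P) (c ↑Q)) :
    ∀ s1 s2, s1 ≤ m + 3 - (Q - P) → s2 ≤ m + 3 - (Q - P) →
      G.dist (c ↑(Q + s1)) (c ↑(Q + s2)) ≤ 2 := by
  apply surgery1 h.hmin h.hc Q (m + 3 - (Q - P)) (by omega) (by omega)
  rw [cadd' c (show Q + (m + 3 - (Q - P)) = P + (m + 3) by omega)]
  exact had

lemma nadj {P Q : ℕ} (hPQ : P < Q) (hQ : Q < m + 3) (h1 : Q - P ≠ 1)
    (h2 : ¬(P = 0 ∧ Q = m + 2))
    (h3 : ¬(2 ≤ P ∧ P ≤ m - 2 ∧ (Q = m + 1 ∨ Q = m + 2))) :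
    ¬ G.Adj (c ↑P) (c ↑Q) := by
  intro had
  rcases h.adj_class P Q hPQ hQ had with e | e | e
  · exact h1 e
  · exact h2 e
  · exact h3 e

lemma dist2 {a b : ℕ} (ha : a < m + 3) (hb : b < m + 3) (hne : a ≠ b)
    (hle : G.dist (c ↑a) (c ↑b) ≤ 2) (hnadj : ¬ G.Adj (c ↑a) (c ↑b)) :
    G.dist (c ↑a) (c ↑b) = 2 := by
  have h0 := h.dpos ha hb hne
  have h1 : G.dist (c ↑a) (c ↑b) ≠ 1 := fun h1 =>
    hnadj (SimpleGraph.dist_eq_one_iff_adj.mp h1)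
  omega

/-- there is no chord from position 2 to position m+1 -/
lemma kill2m1 (had : G.Adj (c ↑(2 : ℕ)) (c ↑(m + 1))) : False := by
  have hm := h.hm
  have hm4 : 4 ≤ m := by
    rcases h.adj_class 2 (m + 1) (by omega) (by omega) had with e | e | e <;> omega
  have hwrap : G.Adj (c ↑(m + 2)) (c ↑(0 : ℕ)) := by
    have := adjp h.hc (m + 2)
    rwa [cadd' c (show m + 2 + 1 = 0 + (m + 3) by omega)] at this
  rcases (by omega : m = 4 ∨ m = 5 ∨ 6 ≤ m) with hmv | hmv | hmv
  · -- m = 4 : vertices 3 and 5 are both common neighbours of 2 and 4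
    subst hmv
    have hd24 : G.dist (c ↑(2 : ℕ)) (c ↑(4 : ℕ)) = 2 := by
      refine h.dist2 (by omega) (by omega) (by omega) (h.darc 2 2) ?_
      exact h.nadj (by omega) (by omega) (by omega) (by omega) (by omega)
    have := two_commons h.hG hd24 (adjp h.hc 2) (adjp h.hc 3) had ((adjp h.hc 4).symm)
    exact cneq h.hc 3 5 (by omega) (by omega) (by omega) this
  · -- m = 5 : analyse d(0,4)
    subst hmv
    have no27 : ¬ G.Adj (c ↑(2 : ℕ)) (c ↑(7 : ℕ)) := by
      intro had27
      have hd02 : G.dist (c ↑(0 : ℕ)) (c ↑(2 : ℕ)) = 2 := by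
        refine h.dist2 (by omega) (by omega) (by omega) (h.darc 0 2) ?_
        exact h.nadj (by omega) (by omega) (by omega) (by omega) (by omega)
      have := two_commons h.hG hd02 (adjp h.hc 0) (adjp h.hc 1) hwrap.symm had27.symm
      exact cneq h.hc 1 7 (by omega) (by omega) (by omega) this
    have hd04ge : 3 ≤ G.dist (c ↑(0 : ℕ)) (c ↑(4 : ℕ)) := h.F0m1
    have hd04le : G.dist (c ↑(0 : ℕ)) (c ↑(4 : ℕ)) ≤ 4 := h.darc 0 4
    rcases (by omega : G.dist (c ↑(0 : ℕ)) (c ↑(4 : ℕ)) = 4 ∨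
        G.dist (c ↑(0 : ℕ)) (c ↑(4 : ℕ)) = 3) with hd04 | hd04
    · -- two geodesics of length 4
      have := four_unique h.hG hd04 (adjp h.hc 0) (adjp h.hc 1) (adjp h.hc 2) (adjp h.hc 3)
        hwrap.symm ((adjp h.hc 6).symm) ((adjp h.hc 5).symm) ((adjp h.hc 4).symm)
      exact cneq h.hc 1 7 (by omega) (by omega) (by omega) this.1
    · obtain ⟨x, y, a1, a2, a3⟩ := walk_len3 hd04
      have hts := htail h.conn hd04 a1 a2 a3
      by_cases hxon : ∀ r : ZMod (5 + 3), x ≠ c r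
      · by_cases hyon : ∀ r : ZMod (5 + 3), y ≠ c r
        · -- both interior vertices off circuit : length-3 surgery on arc 4 → 0
          have SB := surgery3 h.hmin h.hc 4 4 x y (by omega) (by omega) ?_ a2 a3 hxon hyon
            a2.ne
          · have hT : G.dist (c ↑(5 : ℕ)) (c ↑(4 + 4 : ℕ)) ≤ 2 := SB 1 4 (by omega) (by omega)
            rw [cadd' c (show (4 + 4 : ℕ) = 0 + (5 + 3) by omega)] at hT
            rw [SimpleGraph.dist_comm] at hT
            rw [h.hgeo] at hT
            omega
          · rw [cadd' c (show (4 + 4 : ℕ) = 0 + (5 + 3) by omega)]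
            exact a1
        · push_neg at hyon
          obtain ⟨r, hre⟩ := hyon
          have hrj : c r = c ↑(r.val) := (congrArg c (ZMod.natCast_rightInverse r)).symm
          rw [hre, hrj] at a2 a3
          rcases h.nbrm1 r.val (ZMod.val_lt r) a3.symm with e | e
          · -- y = c 3 : d(0,3) = 2 with an off-circuit common neighbour
            rw [e] at a2
            have SB := surgery2 h.hmin h.hc 3 5 x (by omega) (by omega) ?_ a2 hxon
            · have hT : G.dist (c ↑(5 : ℕ)) (c ↑(3 + 5 : ℕ)) ≤ 2 :=
                SB 2 5 (by omega) (by omega)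
              rw [cadd' c (show (3 + 5 : ℕ) = 0 + (5 + 3) by omega)] at hT
              rw [SimpleGraph.dist_comm] at hT
              have : G.dist (c ↑(0 : ℕ)) (c ↑(5 : ℕ)) = 3 := h.hgeo
              omega
            · rw [cadd' c (show (3 + 5 : ℕ) = 0 + (5 + 3) by omega)]
              exact a1
          · -- y = c 5 : contradicts d(0,5) = 3
            rw [hre, hrj, e] at hts
            have : G.dist (c ↑(0 : ℕ)) (c ↑(5 : ℕ)) = 3 := h.hgeo
            omega
      · push_neg at hxon
        obtain ⟨r, hre⟩ := hxon
        have hrj : c r = c ↑(r.val) := (congrArg c (ZMod.natCast_rightInverse r)).symm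
        rw [hre, hrj] at a1 a2
        rcases h.nbr0 r.val (ZMod.val_lt r) a1 with e | e
        · -- x = c 1
          rw [e] at a2
          rw [hre, hrj, e] at hts
          obtain ⟨hx4, -⟩ := hts
          by_cases hyon : ∀ r : ZMod (5 + 3), y ≠ c r
          · have SB := surgery2 h.hmin h.hc 4 5 y (by omega) (by omega) ?_ a3 hyon
            · have hT : G.dist (c ↑(5 : ℕ)) (c ↑(4 + 4 : ℕ)) ≤ 2 :=
                SB 1 4 (by omega) (by omega)
              rw [cadd' c (show (4 + 4 : ℕ) = 0 + (5 + 3) by omega)] at hT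
              rw [SimpleGraph.dist_comm] at hT
              have : G.dist (c ↑(0 : ℕ)) (c ↑(5 : ℕ)) = 3 := h.hgeo
              omega
            · rw [cadd' c (show (4 + 5 : ℕ) = 1 + (5 + 3) by omega)]
              exact a2
          · push_neg at hyon
            obtain ⟨r2, hre2⟩ := hyon
            have hrj2 : c r2 = c ↑(r2.val) := (congrArg c (ZMod.natCast_rightInverse r2)).symm
            rw [hre2, hrj2] at a2 a3
            rcases h.nbrm1 r2.val (ZMod.val_lt r2) a3.symm with e2 | e2
            · rw [e2] at a2
              rcases h.nbr1 3 (by omega) a2 with e3 | e3 <;> omega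
            · rw [e2] at a2
              rcases h.nbr1 5 (by omega) a2 with e3 | e3 <;> omega
        · -- x = c 7
          rw [e] at a2
          rw [hre, hrj, e] at hts
          obtain ⟨hx4, -⟩ := hts
          by_cases hyon : ∀ r : ZMod (5 + 3), y ≠ c r
          · have SB := surgery2 h.hmin h.hc 7 5 y (by omega) (by omega) ?_ a2.symm hyon
            · have hT : G.dist (c ↑(7 + 1 : ℕ)) (c ↑(7 + 5 : ℕ)) ≤ 2 :=
                SB 1 5 (by omega) (by omega)
              rw [cadd' c (show (7 + 1 : ℕ) = 0 + (5 + 3) by omega),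
                cadd' c (show (7 + 5 : ℕ) = 4 + (5 + 3) by omega)] at hT
              omega
            · rw [cadd' c (show (7 + 5 : ℕ) = 4 + (5 + 3) by omega)]
              exact a3.symm
          · push_neg at hyon
            obtain ⟨r2, hre2⟩ := hyon
            have hrj2 : c r2 = c ↑(r2.val) := (congrArg c (ZMod.natCast_rightInverse r2)).symm
            rw [hre2, hrj2] at a2 a3
            rcases h.nbrm1 r2.val (ZMod.val_lt r2) a3.symm with e2 | e2
            · -- y = c 3 : chord (3,7), contradiction via the pair (2,7)
              rw [e2] at a2
              have hd27 : G.dist (c ↑(2 : ℕ)) (c ↑(7 : ℕ)) = 2 := by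
                refine h.dist2 (by omega) (by omega) (by omega)
                  (dist_le_two_of_adj_adj (adjp h.hc 2) a2.symm) (fun hadj => no27 hadj)
              have := two_commons h.hG hd27 (adjp h.hc 2) a2.symm had (adjp h.hc 6)
              exact cneq h.hc 3 6 (by omega) (by omega) (by omega) this
            · -- y = c 5 : chord (5,7) impossible
              rw [e2] at a2
              exact h.nadj (show (5:ℕ) < 5 + 2 by omega) (by omega) (by omega) (by omega)
                (by omega) a2.symm
      -- (the nonexistent chord (5,7) case handled above)
  · -- m ≥ 6 : analyse the pair (2, m-1)
    have hd2m1 : G.dist (c ↑(2 : ℕ)) (c ↑(m - 1)) = 2 := by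
      have hle : G.dist (c ↑(2 : ℕ)) (c ↑(m - 1)) ≤ 2 := by
        have hT := h.chordS1 (show 2 < m + 1 by omega) (by omega) (by omega) had 0
          (m - 3) (by omega) (by omega)
        rw [show 2 + 0 = 2 by omega, show 2 + (m - 3) = m - 1 by omega] at hT
        exact hT
      refine h.dist2 (by omega) (by omega) (by omega) hle ?_
      exact h.nadj (by omega) (by omega) (by omega) (by omega) (by omega)
    obtain ⟨q, b1, b2⟩ := walk_len2 hd2m1
    by_cases hqon : ∀ r : ZMod (m + 3), q ≠ c r
    · have SB := surgery2 h.hmin h.hc (m - 1) 6 q (by omega) (by omega) ?_ b2 hqon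
      · have hT : G.dist (c ↑(m - 1 + 1)) (c ↑(m - 1 + 4)) ≤ 2 := SB 1 4 (by omega) (by omega)
        rw [show m - 1 + 1 = m by omega,
          cadd' c (show m - 1 + 4 = 0 + (m + 3) by omega)] at hT
        rw [SimpleGraph.dist_comm] at hT
        rw [h.hgeo] at hT
        omega
      · rw [cadd' c (show m - 1 + 6 = 2 + (m + 3) by omega)]
        exact b1
    · push_neg at hqon
      obtain ⟨r, hre⟩ := hqon
      have hrj : c r = c ↑(r.val) := (congrArg c (ZMod.natCast_rightInverse r)).symm
      rw [hre, hrj] at b1 b2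
      rcases h.nbrm1 r.val (ZMod.val_lt r) b2.symm with e | e
      · rw [e] at b1
        exact h.nadj (show 2 < m - 2 by omega) (by omega) (by omega) (by omega) (by omega) b1
      · rw [e] at b1
        rcases h.nbrm 2 (by omega) b1.symm with e2 | e2 <;> omega



/-- no chord ends at position m+1 -/
lemma noChordM1 (s : ℕ) (hs2 : 2 ≤ s) (hsm : s ≤ m - 2)
    (had : G.Adj (c ↑s) (c ↑(m + 1))) : False := by
  have hm := h.hm
  have hd1 : G.dist (c ↑(1 : ℕ)) (c ↑(m + 1)) = 2 := by
    have hle : G.dist (c ↑(1 : ℕ)) (c ↑(m + 1)) ≤ 2 := by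
      have hT := h.chordS2 (show s < m + 1 by omega) (by omega) (by omega) had 0 3
        (by omega) (by omega)
      rw [show m + 1 + 0 = m + 1 by omega,
        cadd' c (show m + 1 + 3 = 1 + (m + 3) by omega)] at hT
      rw [SimpleGraph.dist_comm] at hT
      exact hT
    refine h.dist2 (by omega) (by omega) (by omega) hle ?_
    exact h.nadj (by omega) (by omega) (by omega) (by omega) (by omega)
  obtain ⟨z, b1, b2⟩ := walk_len2 hd1
  by_cases hzon : ∀ r : ZMod (m + 3), z ≠ c r
  · have SB := surgery2 h.hmin h.hc 1 m z (by omega) (by omega) ?_ b1.symm hzon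
    · have hT : G.dist (c ↑(1 : ℕ)) (c ↑(1 + (m - 1))) ≤ 2 := SB 0 (m - 1) (by omega)
        (by omega)
      rw [show 1 + (m - 1) = m by omega] at hT
      have := h.F1m
      omega
    · rw [show (1 + m : ℕ) = m + 1 by omega]
      exact b2.symm
  · push_neg at hzon
    obtain ⟨r, hre⟩ := hzon
    have hrj : c r = c ↑(r.val) := (congrArg c (ZMod.natCast_rightInverse r)).symm
    rw [hre, hrj] at b1 b2
    rcases h.nbr1 r.val (ZMod.val_lt r) b1 with e | e
    · rw [e] at b2
      rcases h.nbr0 (m + 1) (by omega) b2 with e2 | e2 <;> omega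
    · rw [e] at b2
      exact h.kill2m1 b2


end Ctx

/-! ### the two main cases -/

lemma caseA (h : Ctx G m c)
    (hIEC : ∀ (k : ℕ) (c' : ZMod k → V), IsIEC G k c' → k ≤ 5)
    (hnoch : ¬ ∃ P Q : ℕ, P < Q ∧ Q < m + 3 ∧ 2 ≤ Q - P ∧ Q - P ≤ m + 1 ∧
      G.Adj (c ↑P) (c ↑Q)) : False := by
  classical
  have hm := h.hm
  have hA : ∀ i j : ℕ, i < m + 3 → j < m + 3 → G.Adj (c ↑i) (c ↑j) →
      j = i + 1 ∨ i = j + 1 ∨ (i = 0 ∧ j = m + 2) ∨ (j = 0 ∧ i = m + 2) := by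
    intro i j hi hj hadj
    rcases Nat.lt_trichotomy i j with hij | hij | hij
    · rcases h.adj_class i j hij hj hadj with hcl | hcl | hcl
      · left; omega
      · right; right; left; omega
      · exact absurd ⟨i, j, hij, hj, by omega, by omega, hadj⟩ hnoch
    · exact (hadj.ne (by rw [hij])).elim
    · rcases h.adj_class j i hij hi hadj.symm with hcl | hcl | hcl
      · right; left; omega
      · right; right; right; omega
      · exact absurd ⟨j, i, hij, hi, by omega, by omega, hadj.symm⟩ hnoch
  -- a shortcut pair exists, pick one of minimal distance
  have hSex : ∃ k, ∃ x y : ZMod (m + 3), G.dist (c x) (c y) = k ∧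
      k < min (y - x).val (x - y).val := by
    by_contra hno
    push_neg at hno
    have hiec : IsIEC G (m + 3) c := by
      refine ⟨h.hc, fun i j => le_antisymm (h.dist_le_cd i j) ?_⟩
      have := hno (G.dist (c i) (c j)) i j rfl
      omega
    have := hIEC (m + 3) c hiec
    omega
  set k := Nat.find hSex with hkdef
  have hk_spec := Nat.find_spec hSex
  rw [← hkdef] at hk_spec
  obtain ⟨x, y, hdxy, hcd⟩ := hk_spec
  have hmink : ∀ k', k' < k → ¬ ∃ x y : ZMod (m + 3), G.dist (c x) (c y) = k' ∧
      k' < min (y - x).val (x - y).val := fun k' hk' => Nat.find_min hSex hk'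
  have hxney : x ≠ y := by
    intro he
    rw [he, sub_self] at hcd
    simp [ZMod.val_zero] at hcd
  have hk1 : 1 ≤ k := by
    rcases Nat.eq_zero_or_pos k with h0 | h0
    · exfalso
      rw [h0] at hdxy
      rcases SimpleGraph.dist_eq_zero_iff_eq_or_not_reachable.mp hdxy with he | hr
      · exact hxney (h.hc.2.1 he)
      · exact hr (h.reach _ _)
    · exact h0
  -- a geodesic between the pair
  obtain ⟨p, hp⟩ := (h.reach (c x) (c y)).exists_walk_length_eq_dist
  rw [hdxy] at hp
  set w : ℕ → V := fun l => p.getVert l with hwdef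
  have hw0 : w 0 = c x := SimpleGraph.Walk.getVert_zero p
  have hwk : w k = c y := by
    have := SimpleGraph.Walk.getVert_length p
    rw [hp] at this
    exact this
  have hadjw : ∀ l, l < k → G.Adj (w l) (w (l + 1)) := by
    intro l hl
    exact p.adj_getVert_succ (by omega)
  have hpre : ∀ l, G.dist (c x) (w l) ≤ l := fun l => gv_pre h.conn p l
  have hsuf : ∀ l, G.dist (w l) (c y) ≤ k - l := by
    intro l
    have := gv_suf p l
    rwa [hp] at this
  have hwinj : ∀ l1 l2, l1 ≤ k → l2 ≤ k → w l1 = w l2 → l1 = l2 := by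
    have haux : ∀ l1 l2, l1 < l2 → l2 ≤ k → w l1 ≠ w l2 := by
      intro l1 l2 hlt hl2 heq
      have h1 := hpre l1
      have h2 := hsuf l2
      have h3 : G.dist (c x) (c y) ≤ G.dist (c x) (w l1) + G.dist (w l2) (c y) := by
        calc G.dist (c x) (c y) ≤ G.dist (c x) (w l2) + G.dist (w l2) (c y) :=
              h.conn.dist_triangle
          _ = G.dist (c x) (w l1) + G.dist (w l2) (c y) := by rw [heq]
      rw [hdxy] at h3
      omega
    intro l1 l2 hl1 hl2 heq
    rcases Nat.lt_trichotomy l1 l2 with hlt | hlt | hlt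
    · exact absurd heq (haux l1 l2 hlt hl2)
    · exact hlt
    · exact absurd heq.symm (haux l2 l1 hlt hl1)
  have hwoff : ∀ l, 0 < l → l < k → ∀ r : ZMod (m + 3), w l ≠ c r := by
    intro l hl0 hlk r heq
    have d1 : G.dist (c x) (c r) ≤ l := by rw [← heq]; exact hpre l
    have d2 : G.dist (c r) (c y) ≤ k - l := by rw [← heq]; exact hsuf l
    have e1 : G.dist (c x) (c r) = min ((r - x).val) ((x - r).val) := by
      have hle := h.dist_le_cd x r
      rcases lt_or_eq_of_le hle with hlt' | hE
      · exact absurd ⟨x, r, rfl, hlt'⟩ (hmink _ (by omega))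
      · exact hE
    have e2 : G.dist (c r) (c y) = min ((y - r).val) ((r - y).val) := by
      have hle := h.dist_le_cd r y
      rcases lt_or_eq_of_le hle with hlt' | hE
      · exact absurd ⟨r, y, rfl, hlt'⟩ (hmink _ (by omega))
      · exact hE
    have htri := cd_tri x r y
    omega
  -- surgery along the geodesic: k ≤ 2
  set t1 := (y - x).val with ht1def
  have ht1 : k < t1 := lt_of_lt_of_le hcd (min_le_left _ _)
  have ht2 : k < (x - y).val := lt_of_lt_of_le hcd (min_le_right _ _)
  have ht1lt : t1 < m + 3 := ZMod.val_lt _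
  have ht2lt : (x - y).val < m + 3 := ZMod.val_lt _
  have hx' : ((x.val : ℕ) : ZMod (m + 3)) = x := ZMod.natCast_rightInverse _
  have hy' : ((y.val : ℕ) : ZMod (m + 3)) = y := ZMod.natCast_rightInverse _
  have hsum : t1 + (x - y).val = m + 3 := by
    have hne0 : (y - x) ≠ 0 := fun h0 => hxney (sub_eq_zero.mp h0).symm
    have hxy : (x - y) = -(y - x) := by ring
    rw [hxy, ZMod.neg_val]
    simp only [hne0, if_false]
    omega
  have Sc : ∀ s1 s2, s1 ≤ t1 → s2 ≤ t1 →
      G.dist (c ↑(x.val + s1)) (c ↑(x.val + s2)) ≤ 2 := by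
    apply surgery_core h.hmin h.hc x.val t1 k (fun l => w (k - l)) (by omega) (by omega)
      (by omega)
    · have e3 : ((x.val + t1 : ℕ) : ZMod (m + 3)) = y := by
        rw [Nat.cast_add, hx', ht1def, ZMod.natCast_rightInverse]; ring
      show w (k - 0) = c ↑(x.val + t1)
      rw [Nat.sub_zero, hwk]
      exact (congrArg c e3).symm
    · show w (k - k) = c ↑(x.val)
      rw [Nat.sub_self, hw0]
      exact (congrArg c hx').symm
    · intro l hl
      have e : k - l - 1 + 1 = k - l := by omega
      have hA2 := hadjw (k - l - 1) (by omega)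
      rw [e] at hA2
      have e2 : k - (l + 1) = k - l - 1 := by omega
      show G.Adj (w (k - l)) (w (k - (l + 1)))
      rw [e2]
      exact hA2.symm
    · intro l hl0 hlk r
      exact hwoff (k - l) (by omega) (by omega) r
    · intro l1 l2 hl1 hl2 heq
      have := hwinj (k - l1) (k - l2) (by omega) (by omega) heq
      omega
  have hk2 : k ≤ 2 := by
    have hS := Sc 0 t1 (by omega) (le_refl _)
    have e0 : ((x.val + 0 : ℕ) : ZMod (m + 3)) = x := by simpa using hx'
    have e3 : ((x.val + t1 : ℕ) : ZMod (m + 3)) = y := by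
      have et : ((t1 : ℕ) : ZMod (m + 3)) = y - x := ZMod.natCast_rightInverse _
      rw [Nat.cast_add, hx', et]; ring
    rw [congrArg c e0, congrArg c e3, hdxy] at hS
    exact hS
  -- normalize to natural positions P < Q
  have hvt1 : t1 = if x.val ≤ y.val then y.val - x.val else (m + 3) + y.val - x.val := by
    rw [ht1def]
    conv_lhs => rw [← hx', ← hy']
    exact hval' y.val x.val (ZMod.val_lt _) (ZMod.val_lt _)
  have hvne : x.val ≠ y.val := by
    intro he
    apply hxney
    rw [← hx', ← hy', he]
  have hmain : ∃ P Q : ℕ, P < Q ∧ Q < m + 3 ∧ k + 1 ≤ Q - P ∧ Q - P + k + 1 ≤ m + 3 ∧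
      (k = 2 → ∃ z, G.Adj (c ↑P) z ∧ G.Adj z (c ↑Q) ∧ ∀ r : ZMod (m + 3), z ≠ c r) ∧
      G.dist (c ↑P) (c ↑Q) = k := by
    have hz : k = 2 → G.Adj (c x) (w 1) ∧ G.Adj (w 1) (c y) ∧
        (∀ r : ZMod (m + 3), w 1 ≠ c r) := by
      intro hk
      refine ⟨?_, ?_, hwoff 1 (by omega) (by omega)⟩
      · rw [← hw0]; exact hadjw 0 (by omega)
      · have := hadjw 1 (by omega)
        rwa [show (1 + 1 : ℕ) = k by omega, hwk] at this
    rcases Nat.lt_or_ge x.val y.val with hord | hord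
    · refine ⟨x.val, y.val, hord, ZMod.val_lt _, ?_, ?_, ?_, ?_⟩
      · have : t1 = y.val - x.val := by rw [hvt1, if_pos (by omega)]
        omega
      · have : t1 = y.val - x.val := by rw [hvt1, if_pos (by omega)]
        omega
      · intro hk
        obtain ⟨a1, a2, a3⟩ := hz hk
        exact ⟨w 1, by rwa [congrArg c hx'], by rwa [congrArg c hy'], a3⟩
      · rw [congrArg c hx', congrArg c hy']
        exact hdxy
    · have hord' : y.val < x.val := by omega
      refine ⟨y.val, x.val, hord', ZMod.val_lt _, ?_, ?_, ?_, ?_⟩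
      · have : t1 = (m + 3) + y.val - x.val := by rw [hvt1, if_neg (by omega)]
        omega
      · have : t1 = (m + 3) + y.val - x.val := by rw [hvt1, if_neg (by omega)]
        omega
      · intro hk
        obtain ⟨a1, a2, a3⟩ := hz hk
        exact ⟨w 1, by rw [congrArg c hy']; exact a2.symm,
          by rw [congrArg c hx']; exact a1.symm, a3⟩
      · rw [congrArg c hx', congrArg c hy', SimpleGraph.dist_comm]
        exact hdxy
  obtain ⟨P, Q, hPQlt, hQlt, hg1, hg2, hz2, hdPQ⟩ := hmain
  rcases (by omega : k = 1 ∨ k = 2) with hk | hk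
  · rw [hk] at hdPQ
    have hadjPQ : G.Adj (c ↑P) (c ↑Q) := SimpleGraph.dist_eq_one_iff_adj.mp hdPQ
    exact hnoch ⟨P, Q, hPQlt, hQlt, by omega, by omega, hadjPQ⟩
  obtain ⟨z, hzP, hzQ, hzoff⟩ := hz2 hk
  have SA1 : ∀ s1 s2, s1 ≤ Q - P → s2 ≤ Q - P →
      G.dist (c ↑(P + s1)) (c ↑(P + s2)) ≤ 2 := by
    apply surgery2 h.hmin h.hc P (Q - P) z (by omega) (by omega)
    · rw [show P + (Q - P) = Q by omega]
      exact hzQ.symm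
    · exact hzP.symm
    · exact hzoff
  have SA2 : ∀ s1 s2, s1 ≤ m + 3 - (Q - P) → s2 ≤ m + 3 - (Q - P) →
      G.dist (c ↑(Q + s1)) (c ↑(Q + s2)) ≤ 2 := by
    apply surgery2 h.hmin h.hc Q (m + 3 - (Q - P)) z (by omega) (by omega)
    · rw [cadd' c (show Q + (m + 3 - (Q - P)) = P + (m + 3) by omega)]
      exact hzP
    · exact hzQ
    · exact hzoff
  obtain ⟨hP2, hPm2, hQv⟩ := h.sep P Q hPQlt hQlt SA1 SA2
  rcases (by omega : 5 ≤ m ∨ m = 4) with hm5 | hm4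
  · -- m ≥ 5
    rcases (by omega : 3 ≤ P ∨ P = 2) with hP3 | hPe
    · -- P ≥ 3 : d(0, P) = 2 leads to contradictions
      have hd0P : G.dist (c ↑(0 : ℕ)) (c ↑P) ≤ 2 := by
        have hT := SA2 (m + 3 - Q) (m + 3 - Q + P) (by omega) (by omega)
        rw [cadd' c (show Q + (m + 3 - Q) = 0 + (m + 3) by omega),
            cadd' c (show Q + (m + 3 - Q + P) = P + (m + 3) by omega)] at hT
        exact hT
      have hd0Pe : G.dist (c ↑(0 : ℕ)) (c ↑P) = 2 := by
        have hne0 := h.dpos (show (0 : ℕ) < m + 3 by omega) (show P < m + 3 by omega)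
          (by omega)
        have hne1 : G.dist (c ↑(0 : ℕ)) (c ↑P) ≠ 1 := by
          intro h1
          have hadj := SimpleGraph.dist_eq_one_iff_adj.mp h1
          rcases h.nbr0 P (by omega) hadj with e | e <;> omega
        omega
      obtain ⟨z0, hz01, hz02⟩ := walk_len2 hd0Pe
      by_cases hzon : ∀ r : ZMod (m + 3), z0 ≠ c r
      · -- off-circuit: surgery along arc P → 0 hits the pair (m, 0)
        have SB : ∀ s1 s2, s1 ≤ m + 3 - P → s2 ≤ m + 3 - P →
            G.dist (c ↑(P + s1)) (c ↑(P + s2)) ≤ 2 := by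
          apply surgery2 h.hmin h.hc P (m + 3 - P) z0 (by omega) (by omega)
          · rw [cadd' c (show P + (m + 3 - P) = 0 + (m + 3) by omega)]
            exact hz01
          · exact hz02
          · exact hzon
        have hT := SB (m - P) (m + 3 - P) (by omega) (by omega)
        rw [show P + (m - P) = m by omega,
            cadd' c (show P + (m + 3 - P) = 0 + (m + 3) by omega)] at hT
        rw [SimpleGraph.dist_comm, h.hgeo] at hT
        omega
      · push_neg at hzon
        obtain ⟨r, hre⟩ := hzon
        have hrj : c r = c ↑(r.val) := (congrArg c (ZMod.natCast_rightInverse r)).symm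
        rw [hre, hrj] at hz01 hz02
        rcases h.nbr0 r.val (ZMod.val_lt r) hz01 with e | e
        · rw [e] at hz02
          rcases h.nbr1 P (by omega) hz02 with e2 | e2 <;> omega
        · rw [e] at hz02
          exact hnoch ⟨P, m + 2, by omega, by omega, by omega, by omega, hz02.symm⟩
    · -- P = 2 : d(2, m) = 2 leads to contradictions
      have hd2m : G.dist (c ↑(2 : ℕ)) (c ↑m) ≤ 2 := by
        have hT := SA1 0 (m - 2) (by omega) (by omega)
        rw [show P + 0 = 2 by omega, show P + (m - 2) = m by omega] at hT
        exact hT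
      have hd2me : G.dist (c ↑(2 : ℕ)) (c ↑m) = 2 := by
        have hne0 := h.dpos (show (2 : ℕ) < m + 3 by omega) (show m < m + 3 by omega)
          (by omega)
        have hne1 : G.dist (c ↑(2 : ℕ)) (c ↑m) ≠ 1 := by
          intro h1
          have hadj := SimpleGraph.dist_eq_one_iff_adj.mp h1
          rcases h.nbrm 2 (by omega) hadj.symm with e | e <;> omega
        omega
      obtain ⟨z0, hz01, hz02⟩ := walk_len2 hd2me
      by_cases hzon : ∀ r : ZMod (m + 3), z0 ≠ c r
      · -- off-circuit: surgery along arc m → 2 hits the pair (m, 0)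
        have SB : ∀ s1 s2, s1 ≤ 5 → s2 ≤ 5 →
            G.dist (c ↑(m + s1)) (c ↑(m + s2)) ≤ 2 := by
          apply surgery2 h.hmin h.hc m 5 z0 (by omega) (by omega)
          · rw [cadd' c (show m + 5 = 2 + (m + 3) by omega)]
            exact hz01
          · exact hz02
          · exact hzon
        have hT := SB 0 3 (by omega) (by omega)
        rw [show m + 0 = m by omega,
            cadd' c (show m + 3 = 0 + (m + 3) by omega)] at hT
        rw [SimpleGraph.dist_comm, h.hgeo] at hT
        omega
      · push_neg at hzon
        obtain ⟨r, hre⟩ := hzon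
        have hrj : c r = c ↑(r.val) := (congrArg c (ZMod.natCast_rightInverse r)).symm
        rw [hre, hrj] at hz01 hz02
        rcases h.nbrm r.val (ZMod.val_lt r) hz02.symm with e | e
        · rw [e] at hz01
          rcases h.nbrm1 2 (by omega) hz01.symm with e2 | e2 <;> omega
        · rw [e] at hz01
          rcases hA 2 (m + 1) (by omega) (by omega) hz01 with e2 | e2 | e2 | e2 <;> omega
  · -- m = 4
    subst hm4
    have hPe : P = 2 := by omega
    subst hPe
    have hd03 : G.dist (c ↑(0 : ℕ)) (c ↑(3 : ℕ)) = 3 := by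
      have hle : G.dist (c ↑(0 : ℕ)) (c ↑(3 : ℕ)) ≤ 3 := h.darc 0 3
      have hge : 3 ≤ G.dist (c ↑(0 : ℕ)) (c ↑(3 : ℕ)) := h.F0m1
      omega
    have geo03 : ∀ z1 z2 : V, G.Adj (c ↑(0 : ℕ)) z1 → G.Adj z1 z2 →
        G.Adj z2 (c ↑(3 : ℕ)) → z1 = c ↑(1 : ℕ) ∧ z2 = c ↑(2 : ℕ) := by
      intro z1 z2 a1 a2 a3
      exact three_unique h.hG hd03 a1 a2 a3 (adjp h.hc 0) (adjp h.hc 1) (adjp h.hc 2)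
    have hadj60 : G.Adj (c ↑(6 : ℕ)) (c ↑(0 : ℕ)) := by
      have := adjp h.hc 6
      rwa [cadd' c (show (6 + 1 : ℕ) = 0 + (4 + 3) by omega)] at this
    have D36 : 3 ≤ G.dist (c ↑(3 : ℕ)) (c ↑(6 : ℕ)) := by
      by_contra hcon
      have hne0 := h.dpos (show (3 : ℕ) < 4 + 3 by omega) (show (6 : ℕ) < 4 + 3 by omega)
        (by omega)
      have hne1 : G.dist (c ↑(3 : ℕ)) (c ↑(6 : ℕ)) ≠ 1 := by
        intro h1
        have hadj := SimpleGraph.dist_eq_one_iff_adj.mp h1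
        rcases hA 3 6 (by omega) (by omega) hadj with e | e | e | e <;> omega
      have h2 : G.dist (c ↑(3 : ℕ)) (c ↑(6 : ℕ)) = 2 := by omega
      obtain ⟨z0, hz01, hz02⟩ := walk_len2 h2
      by_cases hzon : ∀ r : ZMod (4 + 3), z0 ≠ c r
      · have := geo03 (c ↑(6 : ℕ)) z0 hadj60.symm hz02.symm hz01.symm
        exact cneq h.hc 6 1 (by omega) (by omega) (by omega) this.1
      · push_neg at hzon
        obtain ⟨r, hre⟩ := hzon
        have hrj : c r = c ↑(r.val) := (congrArg c (ZMod.natCast_rightInverse r)).symm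
        rw [hre, hrj] at hz01 hz02
        have hrlt := ZMod.val_lt r
        rcases hA 3 r.val (by omega) (by omega) hz01 with e | e | e | e <;>
          rcases hA r.val 6 (by omega) (by omega) hz02 with e2 | e2 | e2 | e2 <;> omega
    rcases (by omega : Q = 6 ∨ Q = 5) with hQe | hQe
    · subst hQe
      have hT : G.dist (c ↑(3 : ℕ)) (c ↑(6 : ℕ)) ≤ 2 := SA1 1 4 (by omega) (by omega)
      omega
    · subst hQe
      have D26 : 3 ≤ G.dist (c ↑(2 : ℕ)) (c ↑(6 : ℕ)) := by
        by_contra hcon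
        have hne0 := h.dpos (show (2 : ℕ) < 4 + 3 by omega)
          (show (6 : ℕ) < 4 + 3 by omega) (by omega)
        have hne1 : G.dist (c ↑(2 : ℕ)) (c ↑(6 : ℕ)) ≠ 1 := by
          intro h1
          have hadj := SimpleGraph.dist_eq_one_iff_adj.mp h1
          rcases hA 2 6 (by omega) (by omega) hadj with e | e | e | e <;> omega
        have h2 : G.dist (c ↑(2 : ℕ)) (c ↑(6 : ℕ)) = 2 := by omega
        obtain ⟨z0, hz01, hz02⟩ := walk_len2 h2
        by_cases hzon : ∀ r : ZMod (4 + 3), z0 ≠ c r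
        · have SD : ∀ s1 s2 : ℕ, s1 ≤ 4 → s2 ≤ 4 →
              G.dist (c ↑(2 + s1)) (c ↑(2 + s2)) ≤ 2 := by
            apply surgery2 h.hmin h.hc 2 4 z0 (by omega) (by omega)
            · exact hz02.symm
            · exact hz01.symm
            · exact hzon
          have hT : G.dist (c ↑(3 : ℕ)) (c ↑(6 : ℕ)) ≤ 2 := SD 1 4 (by omega) (by omega)
          omega
        · push_neg at hzon
          obtain ⟨r, hre⟩ := hzon
          have hrj : c r = c ↑(r.val) := (congrArg c (ZMod.natCast_rightInverse r)).symm
          rw [hre, hrj] at hz01 hz02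
          have hrlt := ZMod.val_lt r
          rcases hA 2 r.val (by omega) (by omega) hz01 with e | e | e | e <;>
            rcases hA r.val 6 (by omega) (by omega) hz02 with e2 | e2 | e2 | e2 <;> omega
      have hT : G.dist (c ↑(6 : ℕ)) (c ↑(5 + 4 : ℕ)) ≤ 2 := SA2 1 4 (by omega) (by omega)
      rw [cadd' c (show (5 + 4 : ℕ) = 2 + (4 + 3) by omega)] at hT
      rw [SimpleGraph.dist_comm] at hT
      omega

lemma caseB (h : Ctx G m c)
    (hch : ∃ P Q : ℕ, P < Q ∧ Q < m + 3 ∧ 2 ≤ Q - P ∧ Q - P ≤ m + 1 ∧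
      G.Adj (c ↑P) (c ↑Q)) :
    m = 5 ∧ G.dist (c ↑(0 : ℕ)) (c ↑(1 : ℕ)) = 1 ∧ G.dist (c ↑(0 : ℕ)) (c ↑(2 : ℕ)) = 2 ∧
      G.dist (c ↑(0 : ℕ)) (c ↑(3 : ℕ)) = 2 ∧ G.dist (c ↑(0 : ℕ)) (c ↑(4 : ℕ)) = 3 ∧
      G.dist (c ↑(3 : ℕ)) (c ↑(m + 2)) = 1 := by
  classical
  have hm := h.hm
  obtain ⟨P, Q, hPQ, hQlt, hg2, hg3, had⟩ := hch
  have hcl := h.adj_class P Q hPQ hQlt had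
  have hPb : 2 ≤ P ∧ P ≤ m - 2 ∧ (Q = m + 1 ∨ Q = m + 2) := by
    rcases hcl with e | e | e
    · omega
    · omega
    · exact e
  obtain ⟨hP2, hPm2, hQv⟩ := hPb
  rcases hQv with hQv | hQv
  · subst hQv
    exact (h.noChordM1 P hP2 hPm2 had).elim
  · subst hQv
    -- chord (P, m+2); first force P = m-2
    have hPe : P = m - 2 := by
      by_contra hPne
      have hPm3 : P ≤ m - 3 := by omega
      have hdPm : G.dist (c ↑P) (c ↑m) = 2 := by
        have hle : G.dist (c ↑P) (c ↑m) ≤ 2 := by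
          have hT := h.chordS1 hPQ hQlt (by omega) had 0 (m - P) (by omega) (by omega)
          rw [show P + 0 = P by omega, show P + (m - P) = m by omega] at hT
          exact hT
        refine h.dist2 (by omega) (by omega) (by omega) hle ?_
        exact h.nadj (by omega) (by omega) (by omega) (by omega) (by omega)
      obtain ⟨r0, b1, b2⟩ := walk_len2 hdPm
      by_cases hron : ∀ r : ZMod (m + 3), r0 ≠ c r
      · have SB := surgery2 h.hmin h.hc m (P + 3) r0 (by omega) (by omega) ?_ b2 hron
        · have hT : G.dist (c ↑m) (c ↑(m + 3)) ≤ 2 := SB 0 3 (by omega) (by omega)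
          rw [cadd' c (show m + 3 = 0 + (m + 3) by omega)] at hT
          rw [SimpleGraph.dist_comm] at hT
          rw [h.hgeo] at hT
          omega
        · rw [cadd' c (show m + (P + 3) = P + (m + 3) by omega)]
          exact b1
      · push_neg at hron
        obtain ⟨r, hre⟩ := hron
        have hrj : c r = c ↑(r.val) := (congrArg c (ZMod.natCast_rightInverse r)).symm
        rw [hre, hrj] at b1 b2
        rcases h.nbrm r.val (ZMod.val_lt r) b2.symm with e | e
        · rw [e] at b1
          rcases h.nbrm1 P (by omega) b1.symm with e2 | e2 <;> omega
        · rw [e] at b1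
          exact h.noChordM1 P hP2 hPm2 b1
    subst hPe
    -- kill m = 4
    rcases (by omega : m = 4 ∨ 5 ≤ m) with hm4 | hm5
    · subst hm4
      have hwrap : G.Adj (c ↑(0 : ℕ)) (c ↑(4 + 2)) := by
        have := adjp h.hc 6
        rw [cadd' c (show (6 + 1 : ℕ) = 0 + (4 + 3) by omega)] at this
        exact this.symm
      have hd02 : G.dist (c ↑(0 : ℕ)) (c ↑(2 : ℕ)) = 2 := by
        refine h.dist2 (by omega) (by omega) (by omega) (h.darc 0 2) ?_
        exact h.nadj (by omega) (by omega) (by omega) (by omega) (by omega)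
      have := two_commons h.hG hd02 (adjp h.hc 0) (adjp h.hc 1) hwrap had.symm
      exact absurd this (cneq h.hc 1 6 (by omega) (by omega) (by omega))
    -- chords (s, m+2) for 3 ≤ s ≤ m-3
    have hchords : ∀ s : ℕ, 3 ≤ s → s ≤ m - 3 → G.Adj (c ↑s) (c ↑(m + 2)) := by
      intro s hs3 hsm3
      have hd0s : G.dist (c ↑(0 : ℕ)) (c ↑s) = 2 := by
        have hle : G.dist (c ↑(0 : ℕ)) (c ↑s) ≤ 2 := by
          have hT := h.chordS2 (show m - 2 < m + 2 by omega) (by omega) (by omega) had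
            1 (s + 1) (by omega) (by omega)
          rw [cadd' c (show m + 2 + 1 = 0 + (m + 3) by omega),
            cadd' c (show m + 2 + (s + 1) = s + (m + 3) by omega)] at hT
          exact hT
        refine h.dist2 (by omega) (by omega) (by omega) hle ?_
        exact h.nadj (by omega) (by omega) (by omega) (by omega) (by omega)
      obtain ⟨z, b1, b2⟩ := walk_len2 hd0s
      by_cases hzon : ∀ r : ZMod (m + 3), z ≠ c r
      · exfalso
        have SB := surgery2 h.hmin h.hc s (m + 3 - s) z (by omega) (by omega) ?_ b2
          hzon
        · have hT : G.dist (c ↑(s + (m - s))) (c ↑(s + (m + 3 - s))) ≤ 2 :=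
            SB (m - s) (m + 3 - s) (by omega) (by omega)
          rw [show s + (m - s) = m by omega,
            cadd' c (show s + (m + 3 - s) = 0 + (m + 3) by omega)] at hT
          rw [SimpleGraph.dist_comm] at hT
          rw [h.hgeo] at hT
          omega
        · rw [cadd' c (show s + (m + 3 - s) = 0 + (m + 3) by omega)]
          exact b1
      · push_neg at hzon
        obtain ⟨r, hre⟩ := hzon
        have hrj : c r = c ↑(r.val) := (congrArg c (ZMod.natCast_rightInverse r)).symm
        rw [hre, hrj] at b1 b2
        rcases h.nbr0 r.val (ZMod.val_lt r) b1 with e | e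
        · rw [e] at b2
          rcases h.nbr1 s (by omega) b2 with e2 | e2 <;> omega
        · rw [e] at b2
          exact b2.symm
    -- kill m ≥ 7
    rcases (by omega : 7 ≤ m ∨ m = 6 ∨ m = 5) with hm7 | hm6 | hm5'
    · exfalso
      have had3 : G.Adj (c ↑(3 : ℕ)) (c ↑(m + 2)) := hchords 3 (by omega) (by omega)
      have had5 : G.Adj (c ↑(5 : ℕ)) (c ↑(m + 2)) := by
        rcases (by omega : m = 7 ∨ 8 ≤ m) with hm' | hm'
        · have : (5 : ℕ) = m - 2 := by omega
          rw [this]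
          exact had
        · exact hchords 5 (by omega) (by omega)
      have hd35 : G.dist (c ↑(3 : ℕ)) (c ↑(5 : ℕ)) = 2 := by
        refine h.dist2 (by omega) (by omega) (by omega) (h.darc 3 2) ?_
        exact h.nadj (by omega) (by omega) (by omega) (by omega) (by omega)
      have := two_commons h.hG hd35 (adjp h.hc 3) (adjp h.hc 4) had3 had5.symm
      exact absurd this (cneq h.hc 4 (m + 2) (by omega) (by omega) (by omega))
    · -- kill m = 6
      exfalso
      subst hm6
      have hc38 : G.Adj (c ↑(3 : ℕ)) (c ↑(6 + 2)) := hchords 3 (by omega) (by omega)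
      have hwrap : G.Adj (c ↑(0 : ℕ)) (c ↑(8 : ℕ)) := by
        have := adjp h.hc 8
        rw [cadd' c (show (8 + 1 : ℕ) = 0 + (6 + 3) by omega)] at this
        exact this.symm
      have no28 : ¬ G.Adj (c ↑(2 : ℕ)) (c ↑(8 : ℕ)) := by
        intro had28
        have hd02 : G.dist (c ↑(0 : ℕ)) (c ↑(2 : ℕ)) = 2 := by
          refine h.dist2 (by omega) (by omega) (by omega) (h.darc 0 2) ?_
          exact h.nadj (by omega) (by omega) (by omega) (by omega) (by omega)
        have := two_commons h.hG hd02 (adjp h.hc 0) (adjp h.hc 1) hwrap had28.symm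
        exact absurd this (cneq h.hc 1 8 (by omega) (by omega) (by omega))
      have hd26le : G.dist (c ↑(2 : ℕ)) (c ↑(6 : ℕ)) ≤ 4 := h.darc 2 4
      have hd26ne0 := h.dpos (show (2:ℕ) < 6 + 3 by omega) (show (6:ℕ) < 6 + 3 by omega)
        (by omega)
      have hd26ne1 : G.dist (c ↑(2 : ℕ)) (c ↑(6 : ℕ)) ≠ 1 := fun h1 =>
        h.nadj (show (2:ℕ) < 6 by omega) (by omega) (by omega) (by omega) (by omega)
          (SimpleGraph.dist_eq_one_iff_adj.mp h1)
      have hnbr2 : ∀ j : ℕ, j < 6 + 3 → G.Adj (c ↑(2 : ℕ)) (c ↑j) → j = 1 ∨ j = 3 := by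
        intro j hj hadj
        rcases Nat.lt_trichotomy 2 j with hj0 | hj0 | hj0
        · rcases h.adj_class 2 j hj0 hj hadj with e | e | e
          · omega
          · omega
          · rcases e.2.2 with e2 | e2
            · rw [e2] at hadj
              exact (h.noChordM1 2 (by omega) (by omega) hadj).elim
            · rw [e2] at hadj
              exact (no28 hadj).elim
        · exact ((hadj.ne (by rw [hj0])).elim)
        · rcases h.adj_class j 2 hj0 (by omega) hadj.symm with e | e | e <;> omega
      have hd26ne2 : G.dist (c ↑(2 : ℕ)) (c ↑(6 : ℕ)) ≠ 2 := by
        intro h2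
        obtain ⟨r0, b1, b2⟩ := walk_len2 h2
        by_cases hron : ∀ r : ZMod (6 + 3), r0 ≠ c r
        · have SB := surgery2 h.hmin h.hc 6 5 r0 (by omega) (by omega) ?_ b2 hron
          · have hT : G.dist (c ↑(6 : ℕ)) (c ↑(6 + 3 : ℕ)) ≤ 2 := SB 0 3 (by omega) (by omega)
            rw [cadd' c (show (6 + 3 : ℕ) = 0 + (6 + 3) by omega)] at hT
            rw [SimpleGraph.dist_comm] at hT
            rw [h.hgeo] at hT
            omega
          · rw [cadd' c (show (6 + 5 : ℕ) = 2 + (6 + 3) by omega)]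
            exact b1
        · push_neg at hron
          obtain ⟨r, hre⟩ := hron
          have hrj : c r = c ↑(r.val) := (congrArg c (ZMod.natCast_rightInverse r)).symm
          rw [hre, hrj] at b1 b2
          rcases hnbr2 r.val (ZMod.val_lt r) b1 with e | e
          · rw [e] at b2
            have hge := h.F1m
            have hle := dist_adj b2
            omega
          · rw [e] at b2
            exact h.nadj (show (3:ℕ) < 6 by omega) (by omega) (by omega) (by omega)
              (by omega) b2
      have hd26ne3 : G.dist (c ↑(2 : ℕ)) (c ↑(6 : ℕ)) ≠ 3 := by
        intro h3
        obtain ⟨α, β, a1, a2, a3⟩ := walk_len3 h3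
        have hts := htail h.conn h3 a1 a2 a3
        by_cases haon : ∀ r : ZMod (6 + 3), α ≠ c r
        · by_cases hbon : ∀ r : ZMod (6 + 3), β ≠ c r
          · have SB := surgery3 h.hmin h.hc 6 5 α β (by omega) (by omega) ?_ a2 a3 haon
              hbon a2.ne
            · have hT : G.dist (c ↑(6 : ℕ)) (c ↑(6 + 3 : ℕ)) ≤ 2 := SB 0 3 (by omega)
                (by omega)
              rw [cadd' c (show (6 + 3 : ℕ) = 0 + (6 + 3) by omega)] at hT
              rw [SimpleGraph.dist_comm] at hT
              rw [h.hgeo] at hT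
              omega
            · rw [cadd' c (show (6 + 5 : ℕ) = 2 + (6 + 3) by omega)]
              exact a1
          · push_neg at hbon
            obtain ⟨r, hre⟩ := hbon
            have hrj : c r = c ↑(r.val) := (congrArg c (ZMod.natCast_rightInverse r)).symm
            rw [hre, hrj] at a2 a3
            rcases h.nbrm r.val (ZMod.val_lt r) a3.symm with e | e
            · rw [e] at a2
              have SB := surgery2 h.hmin h.hc 5 6 α (by omega) (by omega) ?_ a2 haon
              · have hT : G.dist (c ↑(6 : ℕ)) (c ↑(5 + 4 : ℕ)) ≤ 2 := SB 1 4 (by omega)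
                  (by omega)
                rw [cadd' c (show (5 + 4 : ℕ) = 0 + (6 + 3) by omega)] at hT
                rw [SimpleGraph.dist_comm] at hT
                rw [h.hgeo] at hT
                omega
              · rw [cadd' c (show (5 + 6 : ℕ) = 2 + (6 + 3) by omega)]
                exact a1
            · rw [e] at a2
              have SB := surgery2 h.hmin h.hc 2 5 α (by omega) (by omega) ?_ a1.symm haon
              · have hT : G.dist (c ↑(2 : ℕ)) (c ↑(6 : ℕ)) ≤ 2 := SB 0 4 (by omega)
                  (by omega)
                omega
              · exact a2.symm
        · push_neg at haon
          obtain ⟨r, hre⟩ := haon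
          have hrj : c r = c ↑(r.val) := (congrArg c (ZMod.natCast_rightInverse r)).symm
          rw [hre, hrj] at a1 a2
          rcases hnbr2 r.val (ZMod.val_lt r) a1 with e | e
          · rw [hre, hrj, e] at hts
            have hge := h.F1m
            omega
          · rw [e] at a2
            by_cases hbon : ∀ r : ZMod (6 + 3), β ≠ c r
            · have SB := surgery2 h.hmin h.hc 6 6 β (by omega) (by omega) ?_ a3 hbon
              · have hT : G.dist (c ↑(6 : ℕ)) (c ↑(6 + 3 : ℕ)) ≤ 2 := SB 0 3 (by omega)
                  (by omega)
                rw [cadd' c (show (6 + 3 : ℕ) = 0 + (6 + 3) by omega)] at hT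
                rw [SimpleGraph.dist_comm] at hT
                rw [h.hgeo] at hT
                omega
              · rw [cadd' c (show (6 + 6 : ℕ) = 3 + (6 + 3) by omega)]
                exact a2
            · push_neg at hbon
              obtain ⟨r2, hre2⟩ := hbon
              have hrj2 : c r2 = c ↑(r2.val) :=
                (congrArg c (ZMod.natCast_rightInverse r2)).symm
              rw [hre2, hrj2] at a2 a3
              rcases h.nbrm r2.val (ZMod.val_lt r2) a3.symm with e2 | e2
              · rw [e2] at a2
                exact h.nadj (show (3 : ℕ) < 5 by omega) (by omega) (by omega) (by omega)
                  (by omega) a2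
              · rw [e2] at a2
                exact h.noChordM1 3 (by omega) (by omega) a2
      have hd26 : G.dist (c ↑(2 : ℕ)) (c ↑(6 : ℕ)) = 4 := by omega
      have hfour := four_unique h.hG hd26 (adjp h.hc 2) (adjp h.hc 3) (adjp h.hc 4)
        (adjp h.hc 5) (adjp h.hc 2) hc38 ((adjp h.hc 7).symm) ((adjp h.hc 6).symm)
      exact absurd hfour.2.1 (cneq h.hc 4 8 (by omega) (by omega) (by omega))
    · -- m = 5 : conclusion
      subst hm5'
      have d37 : G.dist (c ↑(3 : ℕ)) (c ↑(5 + 2)) = 1 :=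
        SimpleGraph.dist_eq_one_iff_adj.mpr had
      have hwrap : G.Adj (c ↑(0 : ℕ)) (c ↑(7 : ℕ)) := by
        have := adjp h.hc 7
        rw [cadd' c (show (7 + 1 : ℕ) = 0 + (5 + 3) by omega)] at this
        exact this.symm
      have d01 : G.dist (c ↑(0 : ℕ)) (c ↑(1 : ℕ)) = 1 :=
        SimpleGraph.dist_eq_one_iff_adj.mpr (adjp h.hc 0)
      have d02 : G.dist (c ↑(0 : ℕ)) (c ↑(2 : ℕ)) = 2 := by
        refine h.dist2 (by omega) (by omega) (by omega) (h.darc 0 2) ?_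
        exact h.nadj (by omega) (by omega) (by omega) (by omega) (by omega)
      have d03 : G.dist (c ↑(0 : ℕ)) (c ↑(3 : ℕ)) = 2 := by
        refine h.dist2 (by omega) (by omega) (by omega)
          (dist_le_two_of_adj_adj hwrap had.symm) ?_
        exact h.nadj (by omega) (by omega) (by omega) (by omega) (by omega)
      have d04 : G.dist (c ↑(0 : ℕ)) (c ↑(4 : ℕ)) = 3 := by
        have hge : 3 ≤ G.dist (c ↑(0 : ℕ)) (c ↑(4 : ℕ)) := h.F0m1
        have htr : G.dist (c ↑(0:ℕ)) (c ↑(4:ℕ)) ≤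
            G.dist (c ↑(0:ℕ)) (c ↑(3:ℕ)) + G.dist (c ↑(3:ℕ)) (c ↑(4:ℕ)) :=
          h.conn.dist_triangle
        have h34 : G.dist (c ↑(3:ℕ)) (c ↑(4:ℕ)) ≤ 1 := dist_adj (adjp h.hc 3)
        omega
      exact ⟨rfl, d01, d02, d03, d04, d37⟩

end Stmt5Aux

theorem stmt5 {V : Type*} (G : SimpleGraph V) (hG : IsGeodetic G)
    (hIEC : ∀ (k : ℕ) (c : ZMod k → V), IsIEC G k c → k ≤ 5)
    (m : ℕ) (c : ZMod (m + 3) → V) (hc : IsEmbCircuit G (m + 3) c)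
    (hdiam : ∃ i j : ZMod (m + 3), 3 ≤ G.dist (c i) (c j))
    (hmin : ∀ (m' : ℕ) (c' : ZMod m' → V), IsEmbCircuit G m' c' →
      (∃ i j : ZMod m', 3 ≤ G.dist (c' i) (c' j)) → m + 3 ≤ m')
    (hgeo : G.dist (c 0) (c (m : ZMod (m + 3))) = 3) :
    m = 5 ∧ G.dist (c 0) (c 1) = 1 ∧ G.dist (c 0) (c 2) = 2 ∧ G.dist (c 0) (c 3) = 2 ∧
      G.dist (c 0) (c 4) = 3 ∧ G.dist (c 3) (c ((m + 2 : ℕ) : ZMod (m + 3))) = 1 := by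
  classical
  have hgeo' : G.dist (c ↑(0 : ℕ)) (c ↑m) = 3 := by simpa using hgeo
  have hm3 : 3 ≤ m := by
    have hle := Stmt5Aux.dist_arc hG hc 0 m
    simp only [Nat.cast_zero, Nat.zero_add] at hle
    rw [hgeo] at hle
    omega
  have hCtx : Stmt5Aux.Ctx G m c := ⟨hG, hc, hmin, hgeo', hm3⟩
  by_cases hch : ∃ P Q : ℕ, P < Q ∧ Q < m + 3 ∧ 2 ≤ Q - P ∧ Q - P ≤ m + 1 ∧
      G.Adj (c ↑P) (c ↑Q)
  · obtain ⟨h1, h2, h3, h4, h5, h6⟩ := Stmt5Aux.caseB hCtx hch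
    refine ⟨h1, ?_, ?_, ?_, ?_, ?_⟩
    · simpa using h2
    · simpa using h3
    · simpa using h4
    · simpa using h5
    · simpa using h6
  · exact (Stmt5Aux.caseA hCtx hIEC hch).elim
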